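/- Let Y, Λ be compact metric spaces, X a compact metric space, and L(y, λ, Q) = E_Q[l(y, λ, x)] for a continuous function l. Define the saddle-point correspondences h^y(Q) = argmin_{y ∈ Y} max_{λ ∈ Λ} L(y, λ, Q) and h^λ(Q) = argmax_{λ ∈ Λ} min_{y ∈ Y} L(y, λ, Q). Then the graph Gr = {(u, v, Q) : u ∈ h^y(Q), v ∈ h^λ(Q)} is closed in Y × Λ × P(X), where P(X) carries the weak topology. -/

import Mathlib

open MeasureTheory Filter Topology BoundedContinuousFunction

/-- Continuity of a sup over a compact parameter space. -/
lemma continuous_isup_compact {A K : Type*} [TopologicalSpace A] [TopologicalSpace K]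
    [CompactSpace K] [Nonempty K] {f : A × K → ℝ} (hf : Continuous f) :
    Continuous fun a => ⨆ k, f (a, k) := by
  have hbdd : ∀ a, BddAbove (Set.range fun k => f (a, k)) := fun a =>
    (isCompact_range (hf.comp (Continuous.prodMk_right a))).bddAbove
  rw [continuous_iff_continuousAt]
  intro a₀
  rw [ContinuousAt, Metric.tendsto_nhds]
  intro ε hε
  set S : A → ℝ := fun a => ⨆ k, f (a, k) with hS
  -- upper bound
  have hub : ∀ᶠ a in 𝓝 a₀, ∀ k, f (a, k) < S a₀ + ε / 2 := by
    have h := IsCompact.eventually_forall_of_forall_eventually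
      (isCompact_univ (X := K)) (x₀ := a₀) (P := fun a k => f (a, k) < S a₀ + ε / 2) ?_
    · filter_upwards [h] with a h k using h k (Set.mem_univ k)
    · intro k _
      have hopen : IsOpen {p : A × K | f p < S a₀ + ε / 2} := isOpen_lt hf continuous_const
      have hmem : (a₀, k) ∈ {p : A × K | f p < S a₀ + ε / 2} := by
        have : f (a₀, k) ≤ S a₀ := le_ciSup (hbdd a₀) k
        simpa using lt_of_le_of_lt this (by linarith)
      exact hopen.mem_nhds hmem
  -- lower bound
  obtain ⟨k₀, -, hk₀⟩ := isCompact_univ.exists_isMaxOn Set.univ_nonempty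
    ((hf.comp (Continuous.prodMk_right a₀)).continuousOn)
  have hSle : S a₀ ≤ f (a₀, k₀) := ciSup_le fun k => hk₀ (Set.mem_univ k)
  have hlb : ∀ᶠ a in 𝓝 a₀, S a₀ - ε / 2 < f (a, k₀) := by
    have hopen : IsOpen {a : A | S a₀ - ε / 2 < f (a, k₀)} :=
      isOpen_lt continuous_const (hf.comp (continuous_id.prodMk continuous_const))
    exact hopen.mem_nhds (by simp only [Set.mem_setOf_eq]; linarith)
  filter_upwards [hub, hlb] with a h1 h2
  have hA : S a ≤ S a₀ + ε / 2 := ciSup_le fun k => (h1 k).le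
  have hB : S a₀ - ε / 2 < S a := lt_of_lt_of_le h2 (le_ciSup (hbdd a) k₀)
  rw [Real.dist_eq, abs_sub_lt_iff]
  constructor <;> linarith

/-- Continuity of an inf over a compact parameter space. -/
lemma continuous_iinf_compact {A K : Type*} [TopologicalSpace A] [TopologicalSpace K]
    [CompactSpace K] [Nonempty K] {f : A × K → ℝ} (hf : Continuous f) :
    Continuous fun a => ⨅ k, f (a, k) := by
  have hbdd : ∀ a, BddBelow (Set.range fun k => f (a, k)) := fun a =>
    (isCompact_range (hf.comp (Continuous.prodMk_right a))).bddBelow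
  rw [continuous_iff_continuousAt]
  intro a₀
  rw [ContinuousAt, Metric.tendsto_nhds]
  intro ε hε
  set S : A → ℝ := fun a => ⨅ k, f (a, k) with hS
  have hub : ∀ᶠ a in 𝓝 a₀, ∀ k, S a₀ - ε / 2 < f (a, k) := by
    have h := IsCompact.eventually_forall_of_forall_eventually
      (isCompact_univ (X := K)) (x₀ := a₀) (P := fun a k => S a₀ - ε / 2 < f (a, k)) ?_
    · filter_upwards [h] with a h k using h k (Set.mem_univ k)
    · intro k _
      have hopen : IsOpen {p : A × K | S a₀ - ε / 2 < f p} := isOpen_lt continuous_const hf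
      have hmem : (a₀, k) ∈ {p : A × K | S a₀ - ε / 2 < f p} := by
        have : S a₀ ≤ f (a₀, k) := ciInf_le (hbdd a₀) k
        simpa using lt_of_lt_of_le (by linarith : S a₀ - ε / 2 < S a₀) this
      exact hopen.mem_nhds hmem
  obtain ⟨k₀, -, hk₀⟩ := isCompact_univ.exists_isMinOn Set.univ_nonempty
    ((hf.comp (Continuous.prodMk_right a₀)).continuousOn)
  have hSle : f (a₀, k₀) ≤ S a₀ := le_ciInf fun k => hk₀ (Set.mem_univ k)
  have hlb : ∀ᶠ a in 𝓝 a₀, f (a, k₀) < S a₀ + ε / 2 := by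
    have hopen : IsOpen {a : A | f (a, k₀) < S a₀ + ε / 2} :=
      isOpen_lt (hf.comp (continuous_id.prodMk continuous_const)) continuous_const
    exact hopen.mem_nhds (by simp only [Set.mem_setOf_eq]; linarith)
  filter_upwards [hub, hlb] with a h1 h2
  have hA : S a₀ - ε / 2 ≤ S a := le_ciInf fun k => (h1 k).le
  have hB : S a < S a₀ + ε / 2 := lt_of_le_of_lt (ciInf_le (hbdd a) k₀) h2
  rw [Real.dist_eq, abs_sub_lt_iff]
  constructor <;> linarith

/-- Joint continuity of the integration pairing on bounded continuous functions
and probability measures. -/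
lemma continuous_integral_pairing {X : Type*} [MetricSpace X] [MeasurableSpace X]
    [OpensMeasurableSpace X] :
    Continuous fun p : (X →ᵇ ℝ) × ProbabilityMeasure X =>
      ∫ x, p.1 x ∂(p.2 : Measure X) := by
  rw [continuous_iff_continuousAt]
  rintro ⟨f₀, Q₀⟩
  rw [ContinuousAt, Metric.tendsto_nhds]
  intro ε hε
  have h1 : Continuous fun Q : ProbabilityMeasure X => ∫ x, f₀ x ∂(Q : Measure X) := by
    rw [continuous_iff_continuousAt]
    intro Q
    exact MeasureTheory.ProbabilityMeasure.tendsto_iff_forall_integral_tendsto.mp tendsto_id f₀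
  have hN1 : ∀ᶠ Q : ProbabilityMeasure X in 𝓝 Q₀,
      dist (∫ x, f₀ x ∂(Q : Measure X)) (∫ x, f₀ x ∂(Q₀ : Measure X)) < ε / 2 := by
    have := h1.continuousAt (x := Q₀)
    rw [ContinuousAt, Metric.tendsto_nhds] at this
    exact this _ (half_pos hε)
  have hN2 : ∀ᶠ f in 𝓝 f₀, dist f f₀ < ε / 2 :=
    Metric.isOpen_ball.eventually_mem (Metric.mem_ball_self (half_pos hε))
  rw [nhds_prod_eq]
  filter_upwards [hN2.prod_mk hN1] with p hp
  obtain ⟨h2, h3⟩ := hp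
  obtain ⟨f, Q⟩ := p
  have hint : dist (∫ x, f x ∂(Q : Measure X)) (∫ x, f₀ x ∂(Q : Measure X)) ≤ dist f f₀ := by
    rw [Real.dist_eq, ← integral_sub (f.integrable _) (f₀.integrable _)]
    calc |∫ x, (f x - f₀ x) ∂(Q : Measure X)|
        = ‖∫ x, (f - f₀) x ∂(Q : Measure X)‖ := by norm_num [BoundedContinuousFunction.sub_apply]
      _ ≤ ‖f - f₀‖ := BoundedContinuousFunction.norm_integral_le_norm _ _
      _ = dist f f₀ := (dist_eq_norm f f₀).symm
  calc dist (∫ x, f x ∂(Q : Measure X)) (∫ x, f₀ x ∂(Q₀ : Measure X))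
      ≤ dist (∫ x, f x ∂(Q : Measure X)) (∫ x, f₀ x ∂(Q : Measure X)) +
        dist (∫ x, f₀ x ∂(Q : Measure X)) (∫ x, f₀ x ∂(Q₀ : Measure X)) := dist_triangle _ _ _
    _ < ε / 2 + ε / 2 := by
        have := lt_of_le_of_lt hint h2
        linarith
    _ = ε := by ring

/-- Closedness of the graph of the saddle-point correspondences
`h^y(Q) = argmin_y max_λ E_Q[l(y,λ,x)]` and `h^λ(Q) = argmax_λ min_y E_Q[l(y,λ,x)]`
in `Y × Λ × P(X)` with the weak topology on probability measures. -/
theorem stmt2 {X Y Λ : Type*}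
    [MetricSpace X] [CompactSpace X] [MeasurableSpace X] [BorelSpace X]
    [MetricSpace Y] [CompactSpace Y] [Nonempty Y]
    [MetricSpace Λ] [CompactSpace Λ] [Nonempty Λ]
    (l : Y → Λ → X → ℝ)
    (hl : Continuous fun p : Y × Λ × X => l p.1 p.2.1 p.2.2) :
    IsClosed {p : Y × Λ × ProbabilityMeasure X |
      (∀ y : Y,
        (⨆ lam : Λ, ∫ x, l p.1 lam x ∂(p.2.2 : Measure X))
          ≤ ⨆ lam : Λ, ∫ x, l y lam x ∂(p.2.2 : Measure X)) ∧
      (∀ lam : Λ,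
        (⨅ y : Y, ∫ x, l y lam x ∂(p.2.2 : Measure X))
          ≤ ⨅ y : Y, ∫ x, l y p.2.1 x ∂(p.2.2 : Measure X))} := by
  have hK : Continuous fun p : (Y × Λ) × X => l p.1.1 p.1.2 p.2 :=
    hl.comp (show Continuous fun p : (Y × Λ) × X => (p.1.1, p.1.2, p.2) by fun_prop)
  set K : C((Y × Λ) × X, ℝ) := ⟨_, hK⟩ with hKdef
  set g : Y × Λ → (X →ᵇ ℝ) :=
    fun q => ContinuousMap.isometryEquivBoundedOfCompact X ℝ (K.curry q) with hgdef
  have hgc : Continuous g :=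
    (ContinuousMap.isometryEquivBoundedOfCompact X ℝ).continuous.comp K.curry.continuous
  have hF : Continuous fun p : (Y × Λ) × ProbabilityMeasure X =>
      ∫ x, l p.1.1 p.1.2 x ∂(p.2 : Measure X) := by
    have h := continuous_integral_pairing.comp
      (hgc.prodMap (continuous_id (X := ProbabilityMeasure X)))
    exact h
  have hS : Continuous fun a : Y × ProbabilityMeasure X =>
      ⨆ lam : Λ, ∫ x, l a.1 lam x ∂(a.2 : Measure X) :=
    continuous_isup_compact
      (f := fun p : (Y × ProbabilityMeasure X) × Λ => ∫ x, l p.1.1 p.2 x ∂(p.1.2 : Measure X))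
      (hF.comp (show Continuous fun p : (Y × ProbabilityMeasure X) × Λ =>
        ((p.1.1, p.2), p.1.2) by fun_prop))
  have hI : Continuous fun a : Λ × ProbabilityMeasure X =>
      ⨅ y : Y, ∫ x, l y a.1 x ∂(a.2 : Measure X) :=
    continuous_iinf_compact
      (f := fun p : (Λ × ProbabilityMeasure X) × Y => ∫ x, l p.2 p.1.1 x ∂(p.1.2 : Measure X))
      (hF.comp (show Continuous fun p : (Λ × ProbabilityMeasure X) × Y =>
        ((p.2, p.1.1), p.1.2) by fun_prop))
  have hset : {p : Y × Λ × ProbabilityMeasure X |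
      (∀ y : Y,
        (⨆ lam : Λ, ∫ x, l p.1 lam x ∂(p.2.2 : Measure X))
          ≤ ⨆ lam : Λ, ∫ x, l y lam x ∂(p.2.2 : Measure X)) ∧
      (∀ lam : Λ,
        (⨅ y : Y, ∫ x, l y lam x ∂(p.2.2 : Measure X))
          ≤ ⨅ y : Y, ∫ x, l y p.2.1 x ∂(p.2.2 : Measure X))} =
      (⋂ y : Y, {p : Y × Λ × ProbabilityMeasure X |
        (⨆ lam : Λ, ∫ x, l p.1 lam x ∂(p.2.2 : Measure X))
          ≤ ⨆ lam : Λ, ∫ x, l y lam x ∂(p.2.2 : Measure X)}) ∩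
      ⋂ lam : Λ, {p : Y × Λ × ProbabilityMeasure X |
        (⨅ y : Y, ∫ x, l y lam x ∂(p.2.2 : Measure X))
          ≤ ⨅ y : Y, ∫ x, l y p.2.1 x ∂(p.2.2 : Measure X)} := by
    ext p
    simp [Set.mem_iInter]
  rw [hset]
  apply IsClosed.inter
  · exact isClosed_iInter fun y => isClosed_le
      (hS.comp (continuous_fst.prodMk (continuous_snd.comp continuous_snd)))
      (hS.comp (continuous_const.prodMk (continuous_snd.comp continuous_snd)))
  · exact isClosed_iInter fun lam => isClosed_le
      (hI.comp (continuous_const.prodMk (continuous_snd.comp continuous_snd)))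
      (hI.comp ((continuous_fst.comp continuous_snd).prodMk (continuous_snd.comp continuous_snd)))
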